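/- Let R be an integral domain with fraction field F, and let α₁, ..., αₙ be elements algebraic over F such that the minimal monic polynomial m₁(X₁) of α₁ over F lies in R[X₁], the minimal monic polynomial m₂(α₁, X₂) of α₂ over F(α₁) lies in R[α₁, X₂], and so on. Then R[α₁, ..., αₙ] ≅ R[X₁, ..., Xₙ]/(m₁, ..., mₙ); in particular the ideal (m₁, ..., mₙ) is prime. -/

import Mathlib

open MvPolynomial

lemma mem_vars_iff_degreeOf_ne_zero {R σ : Type*} [CommSemiring R] (j : σ)
    (p : MvPolynomial σ R) : j ∈ p.vars ↔ degreeOf j p ≠ 0 := by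
  classical
  rw [degreeOf_def, vars_def, Multiset.mem_toFinset, ← Multiset.count_ne_zero]

lemma rename_killCompl_of_vars {R σ τ : Type*} [CommSemiring R] {f : σ → τ}
    (hf : Function.Injective f) {p : MvPolynomial τ R} (hp : ↑p.vars ⊆ Set.range f) :
    rename f (killCompl hf p) = p := by
  have hsupp : p ∈ supported R (Set.range f) := (mem_supported).2 hp
  rw [supported_eq_range_rename, AlgHom.mem_range] at hsupp
  obtain ⟨q, rfl⟩ := hsupp
  have hfun : (Subtype.val : Set.range f → τ)
      = f ∘ fun x : Set.range f => (Equiv.ofInjective f hf).symm x := by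
    funext x; exact (Equiv.apply_ofInjective_symm hf x).symm
  rw [hfun, ← rename_rename, killCompl_rename_app]

lemma span_le_ker {R : Type*} [CommRing R] [IsDomain R]
    {Ω : Type*} [Field Ω] [Algebra R Ω] [Algebra (FractionRing R) Ω]
    [IsScalarTower R (FractionRing R) Ω]
    (n : ℕ) (α : Fin n → Ω)
    (m : Fin n → MvPolynomial (Fin n) R)
    (hvars : ∀ i : Fin n, ∀ j ∈ (m i).vars, j ≤ i)
    (hmin : ∀ i : Fin n,
      MvPolynomial.aeval (fun j => if j < i then Polynomial.C (α j) else Polynomial.X)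
          (m i) =
        (minpoly (IntermediateField.adjoin (FractionRing R) (α '' {j | j < i})) (α i)).map
          (algebraMap _ Ω)) :
    Ideal.span (Set.range m) ≤ RingHom.ker (MvPolynomial.aeval α : MvPolynomial (Fin n) R →ₐ[R] Ω) := by
  rw [Ideal.span_le]
  rintro _ ⟨i, rfl⟩
  have h1 : Polynomial.eval (α i)
      (MvPolynomial.aeval (fun j => if j < i then Polynomial.C (α j) else Polynomial.X) (m i)) = 0 := by
    rw [hmin i, Polynomial.eval_map, ← Polynomial.aeval_def, minpoly.aeval]
  set φ : Polynomial Ω →ₐ[R] Ω :=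
    ((Polynomial.aeval (α i) : Polynomial Ω →ₐ[Ω] Ω).restrictScalars R)
  have h2 : φ.comp (MvPolynomial.aeval
      (fun j => if j < i then Polynomial.C (α j) else Polynomial.X)) =
      MvPolynomial.aeval (fun j => if j < i then α j else α i) := by
    rw [comp_aeval]
    congr 1
    funext j
    by_cases h : j < i <;> simp [h, φ]
  have h3 : MvPolynomial.aeval (fun j => if j < i then α j else α i) (m i)
      = MvPolynomial.aeval α (m i) := by
    rw [aeval_eq_eval₂Hom, aeval_eq_eval₂Hom]
    refine eval₂Hom_congr' rfl (fun j hj _ => ?_) rfl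
    rcases lt_or_eq_of_le (hvars i j hj) with h | h
    · simp [h]
    · simp [h]
  simp only [SetLike.mem_coe, RingHom.mem_ker]
  calc MvPolynomial.aeval α (m i)
      = MvPolynomial.aeval (fun j => if j < i then α j else α i) (m i) := h3.symm
    _ = φ (MvPolynomial.aeval
          (fun j => if j < i then Polynomial.C (α j) else Polynomial.X) (m i)) := by
        rw [← h2, AlgHom.comp_apply]
    _ = 0 := by
        show Polynomial.aeval (α i) _ = 0
        rw [Polynomial.coe_aeval_eq_eval, h1]


theorem ker_eq {R : Type*} [CommRing R] [IsDomain R]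
    {Ω : Type*} [Field Ω] [Algebra R Ω] [Algebra (FractionRing R) Ω]
    [IsScalarTower R (FractionRing R) Ω] :
    ∀ (n : ℕ) (α : Fin n → Ω),
    (∀ i : Fin n,
      IsIntegral (IntermediateField.adjoin (FractionRing R) (α '' {j | j < i})) (α i)) →
    ∀ (m : Fin n → MvPolynomial (Fin n) R),
    (∀ i : Fin n, ∀ j ∈ (m i).vars, j ≤ i) →
    (∀ i : Fin n,
      MvPolynomial.aeval (fun j => if j < i then Polynomial.C (α j) else Polynomial.X)
          (m i) =
        (minpoly (IntermediateField.adjoin (FractionRing R) (α '' {j | j < i})) (α i)).map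
          (algebraMap _ Ω)) →
    RingHom.ker (MvPolynomial.aeval α : MvPolynomial (Fin n) R →ₐ[R] Ω)
        = Ideal.span (Set.range m) := by
  intro n
  induction n with
  | zero =>
    intro α _ m _ _
    have h1 : Set.range m = ∅ := Set.range_eq_empty m
    rw [h1, Ideal.span_empty]
    rw [eq_bot_iff]
    intro p hp
    rw [RingHom.mem_ker] at hp
    obtain ⟨a, rfl⟩ := MvPolynomial.C_surjective (Fin 0) p
    rw [aeval_C] at hp
    have : Function.Injective (algebraMap R Ω) := by
      rw [IsScalarTower.algebraMap_eq R (FractionRing R) Ω]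
      exact (algebraMap (FractionRing R) Ω).injective.comp
        (IsFractionRing.injective R (FractionRing R))
    rw [Ideal.mem_bot]
    rw [show (0 : Ω) = algebraMap R Ω 0 by simp] at hp
    rw [this hp]
    simp
  | succ n IH =>
    intro α halg m hvars hmin
    set α' : Fin n → Ω := α ∘ Fin.castSucc with hα'
    have hset : ∀ i : Fin n, α' '' {j | j < i} = α '' {j | j < i.castSucc} := by
      intro i
      ext x
      constructor
      · rintro ⟨j, hj, rfl⟩
        exact ⟨j.castSucc, Fin.castSucc_lt_castSucc_iff.2 hj, rfl⟩
      · rintro ⟨j, hj, rfl⟩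
        have hjl : j ≠ Fin.last n := Fin.ne_last_of_lt hj
        obtain ⟨j', rfl⟩ := Fin.exists_castSucc_eq.2 hjl
        exact ⟨j', Fin.castSucc_lt_castSucc_iff.1 hj, rfl⟩
    have hvarsrange : ∀ i : Fin n, ↑(m i.castSucc).vars ⊆ Set.range (Fin.castSucc : Fin n → Fin (n+1)) := by
      intro i j hj
      have hj2 : j ≤ i.castSucc := hvars i.castSucc j hj
      have : j ≠ Fin.last n := Fin.ne_last_of_lt (lt_of_le_of_lt hj2 (Fin.castSucc_lt_last i))
      exact Fin.exists_castSucc_eq.2 this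
    set m'' : Fin n → MvPolynomial (Fin n) R :=
      fun i => killCompl (Fin.castSucc_injective n) (m i.castSucc) with hm''
    have hre : ∀ i : Fin n, rename Fin.castSucc (m'' i) = m i.castSucc := fun i =>
      rename_killCompl_of_vars _ (hvarsrange i)
    have halg' : ∀ i : Fin n,
        IsIntegral (IntermediateField.adjoin (FractionRing R) (α' '' {j | j < i})) (α' i) := by
      intro i
      rw [hset i]
      exact halg i.castSucc
    have hvars' : ∀ i : Fin n, ∀ j ∈ (m'' i).vars, j ≤ i := by
      intro i j hj
      have hd : degreeOf j (m'' i) ≠ 0 := (mem_vars_iff_degreeOf_ne_zero j _).1 hj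
      have hd2 : degreeOf j.castSucc (m i.castSucc) ≠ 0 := by
        rw [← hre i, degreeOf_rename_of_injective (Fin.castSucc_injective n)]
        exact hd
      have := hvars i.castSucc j.castSucc ((mem_vars_iff_degreeOf_ne_zero _ _).2 hd2)
      exact Fin.castSucc_le_castSucc_iff.1 this
    have hmin' : ∀ i : Fin n,
        MvPolynomial.aeval (fun j => if j < i then Polynomial.C (α' j) else Polynomial.X)
            (m'' i) =
          (minpoly (IntermediateField.adjoin (FractionRing R) (α' '' {j | j < i})) (α' i)).map
            (algebraMap _ Ω) := by
      intro i
      rw [hset i]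
      have key : MvPolynomial.aeval
          (fun j => if j < i then Polynomial.C (α' j) else Polynomial.X) (m'' i)
          = MvPolynomial.aeval
            (fun j => if j < i.castSucc then Polynomial.C (α j) else Polynomial.X) (m i.castSucc) := by
        have hfun : (fun j : Fin n => if j < i then Polynomial.C (α' j) else Polynomial.X)
            = ((fun j : Fin (n+1) => if j < i.castSucc then Polynomial.C (α j) else Polynomial.X)
                ∘ Fin.castSucc) := by
          funext j
          by_cases h : j < i
          · rw [Function.comp_apply, if_pos h, if_pos (Fin.castSucc_lt_castSucc_iff.2 h)]
            rfl
          · rw [Function.comp_apply, if_neg h,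
              if_neg (fun hc => h (Fin.castSucc_lt_castSucc_iff.1 hc))]
        rw [hfun, ← aeval_rename, hre i]
      rw [key]
      exact hmin i.castSucc
    set ψ : MvPolynomial (Fin n) R →ₐ[R] Ω := aeval α' with hψ
    set e : MvPolynomial (Fin (n+1)) R ≃ₐ[R] Polynomial (MvPolynomial (Fin n) R) :=
      (renameEquiv R finSuccEquivLast).trans (optionEquivLeft R (Fin n)) with he
    have heX_last : e (X (Fin.last n)) = Polynomial.X := by
      simp [he, finSuccEquivLast_last]
    have heX_cast : ∀ i : Fin n, e (X i.castSucc) = Polynomial.C (X i) := by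
      intro i
      simp [he, finSuccEquivLast_castSucc]
    set Φ : Polynomial (MvPolynomial (Fin n) R) →ₐ[R] Ω :=
      ((Polynomial.aeval (α (Fin.last n)) : Polynomial Ω →ₐ[Ω] Ω).restrictScalars R).comp
        (Polynomial.mapAlgHom ψ) with hΦ
    have hcomm : (aeval α : MvPolynomial (Fin (n+1)) R →ₐ[R] Ω) = Φ.comp e.toAlgHom := by
      apply MvPolynomial.algHom_ext
      intro i
      induction i using Fin.lastCases with
      | last =>
        simp [hΦ, heX_last]
      | cast i =>
        simp only [aeval_X, AlgHom.comp_apply, AlgEquiv.toAlgHom_eq_coe, AlgEquiv.coe_toAlgHom,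
          heX_cast i, hΦ, AlgHom.coe_restrictScalars', Polynomial.mapAlgHom,
          AlgHom.coe_mk, RingHom.coe_mk, MonoidHom.coe_mk, OneHom.coe_mk,
          Polynomial.map_C, Polynomial.aeval_C, hψ, aeval_X, hα']
        simp
    have hJ : RingHom.ker ψ.toRingHom = Ideal.span (Set.range m'') := IH α' halg' m'' hvars' hmin'
    set F := FractionRing R
    set K := IntermediateField.adjoin F (α '' {j | j < Fin.last n}) with hK
    set μ := minpoly K (α (Fin.last n)) with hμ
    have hμmonic : μ.Monic := minpoly.monic (halg (Fin.last n))
    set μΩ := μ.map (algebraMap K Ω) with hμΩ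
    have hM : (e (m (Fin.last n))).map ψ.toRingHom = μΩ := by
      have hAlg : (Polynomial.mapAlgHom ψ).comp e.toAlgHom
          = aeval (fun j => if j < Fin.last n then Polynomial.C (α j) else Polynomial.X) := by
        apply MvPolynomial.algHom_ext
        intro i
        induction i using Fin.lastCases with
        | last =>
          rw [AlgHom.comp_apply, AlgEquiv.toAlgHom_eq_coe, AlgEquiv.coe_toAlgHom, heX_last, aeval_X,
            if_neg (lt_irrefl _)]
          simp [Polynomial.mapAlgHom]
        | cast i =>
          rw [AlgHom.comp_apply, AlgEquiv.toAlgHom_eq_coe, AlgEquiv.coe_toAlgHom, heX_cast i, aeval_X,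
            if_pos (Fin.castSucc_lt_last i)]
          simp [Polynomial.mapAlgHom, hψ, hα']
      have h2 := AlgHom.congr_fun hAlg (m (Fin.last n))
      rw [AlgHom.comp_apply] at h2
      have h3 : (Polynomial.mapAlgHom ψ) (e.toAlgHom (m (Fin.last n)))
          = (e (m (Fin.last n))).map ψ.toRingHom := rfl
      rw [h3] at h2
      rw [h2, hmin (Fin.last n)]
    -- quotient setup
    set ψr : MvPolynomial (Fin n) R →+* Ω := ψ.toRingHom with hψr
    set Sq := MvPolynomial (Fin n) R ⧸ RingHom.ker ψr
    set π : MvPolynomial (Fin n) R →+* Sq := Ideal.Quotient.mk (RingHom.ker ψr) with hπ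
    set ψb : Sq →+* Ω := RingHom.kerLift ψr with hψb
    have hinj : Function.Injective ψb := RingHom.kerLift_injective ψr
    have hcompb : ∀ a, ψb (π a) = ψr a := fun a => RingHom.kerLift_mk ψr a
    haveI : Nontrivial Sq := Ideal.Quotient.nontrivial_iff.mpr (RingHom.ker_ne_top ψr)
    set M : Polynomial (MvPolynomial (Fin n) R) := e (m (Fin.last n)) with hMdef
    set Mb : Polynomial Sq := M.map π with hMb
    have hMbmap : Mb.map ψb = μΩ := by
      rw [hMb, Polynomial.map_map]
      rw [show ψb.comp π = ψr from RingHom.ext hcompb]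
      exact hM
    have hmonic : Mb.Monic := Polynomial.monic_of_injective hinj (by rw [hMbmap]; exact hμmonic.map _)
    have hdegMb : Mb.degree = μ.degree := by
      rw [← Polynomial.degree_map_eq_of_injective hinj, hMbmap, hμΩ,
        Polynomial.degree_map_eq_of_injective (algebraMap K Ω).injective]
    -- range of ψb lands in K
    have hrangeK : ∀ x : Sq, ψb x ∈ K := by
      intro x
      obtain ⟨a, rfl⟩ := Ideal.Quotient.mk_surjective (I := RingHom.ker ψr) x
      rw [show (Ideal.Quotient.mk (RingHom.ker ψr) a) = π a from rfl, hcompb]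
      have h1 : ψr a ∈ Algebra.adjoin R (Set.range α') := by
        rw [Algebra.adjoin_range_eq_range_aeval]
        exact ⟨a, rfl⟩
      have h2 : Algebra.adjoin R (Set.range α') ≤ (Subalgebra.restrictScalars R K.toSubalgebra) := by
        rw [Algebra.adjoin_le_iff]
        rintro _ ⟨j, rfl⟩
        exact IntermediateField.subset_adjoin F _ ⟨j.castSucc, Fin.castSucc_lt_last j, rfl⟩
      exact h2 h1
    set ψK : Sq →+* K := ψb.codRestrict K.toSubring hrangeK with hψK
    have hψKval : ∀ x, (ψK x : Ω) = ψb x := fun x => rfl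
    -- the two inclusions
    refine le_antisymm ?_ (span_le_ker (n+1) α m hvars hmin)
    intro p hp
    rw [RingHom.mem_ker] at hp
    set q : Polynomial (MvPolynomial (Fin n) R) := e p with hq
    set qb : Polynomial Sq := q.map π with hqb
    set r : Polynomial Sq := qb %ₘ Mb with hr
    set hdiv : Polynomial Sq := qb /ₘ Mb with hdiv'
    have hqr : r + Mb * hdiv = qb := Polynomial.modByMonic_add_div qb Mb
    have hevalq : Polynomial.eval₂ ψb (α (Fin.last n)) qb = 0 := by
      rw [hqb, Polynomial.eval₂_map, show ψb.comp π = ψr from RingHom.ext hcompb]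
      have h1 : Polynomial.eval₂ ψr (α (Fin.last n)) q = aeval α p := by
        rw [hcomm]
        rw [Polynomial.eval₂_eq_eval_map]
        show _ = Φ (e p)
        rw [hΦ, AlgHom.comp_apply]
        show _ = Polynomial.aeval (α (Fin.last n)) ((Polynomial.mapAlgHom ψ) q)
        rw [show (Polynomial.mapAlgHom ψ) q = q.map ψr from rfl, Polynomial.coe_aeval_eq_eval]
      rw [h1, hp]
    have hevalM : Polynomial.eval₂ ψb (α (Fin.last n)) Mb = 0 := by
      rw [Polynomial.eval₂_eq_eval_map, hMbmap, hμΩ, Polynomial.eval_map, ← Polynomial.aeval_def,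
        minpoly.aeval]
    have hevalr : Polynomial.eval₂ ψb (α (Fin.last n)) r = 0 := by
      have := congrArg (Polynomial.eval₂ ψb (α (Fin.last n))) hqr
      rw [Polynomial.eval₂_add, Polynomial.eval₂_mul, hevalM, hevalq, zero_mul, add_zero] at this
      exact this
    have hrzero : r = 0 := by
      by_contra hrne
      set r' : Polynomial K := r.map ψK with hr'
      have hr'map : r'.map (algebraMap K Ω) = r.map ψb := by
        rw [hr', Polynomial.map_map]
        congr 1
      have hr'ne : r' ≠ 0 := by
        intro h0
        apply hrne
        have : r.map ψb = 0 := by rw [← hr'map, h0, Polynomial.map_zero]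
        exact (Polynomial.map_eq_zero_iff hinj).1 this
      have haev : Polynomial.aeval (α (Fin.last n)) r' = 0 := by
        rw [Polynomial.aeval_def, Polynomial.eval₂_eq_eval_map, hr'map, Polynomial.eval_map]
        exact hevalr
      have hle := minpoly.degree_le_of_ne_zero K (α (Fin.last n)) hr'ne haev
      have hlt : r.degree < μ.degree := by
        rw [← hdegMb]
        exact Polynomial.degree_modByMonic_lt qb hmonic
      have hled : r'.degree = r.degree := by
        calc r'.degree = (r'.map (algebraMap K Ω)).degree :=
              (Polynomial.degree_map_eq_of_injective (algebraMap K Ω).injective r').symm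
          _ = (r.map ψb).degree := by rw [hr'map]
          _ = r.degree := Polynomial.degree_map_eq_of_injective hinj r
      exact absurd ((hle.trans hled.le).trans_lt hlt) (lt_irrefl _)
    -- lift the divisor and conclude
    obtain ⟨H, hH⟩ := Polynomial.map_surjective π Ideal.Quotient.mk_surjective hdiv
    set u : Polynomial (MvPolynomial (Fin n) R) := q - M * H with hu
    have humap : u.map π = 0 := by
      rw [hu, Polynomial.map_sub, Polynomial.map_mul, hH, ← hMb, ← hqb]
      rw [← hqr, hrzero, zero_add, sub_self]
    have hucoeff : ∀ k, u.coeff k ∈ Ideal.span (Set.range m'') := by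
      intro k
      rw [← hJ]
      have : (u.map π).coeff k = 0 := by rw [humap]; simp
      rw [Polynomial.coeff_map] at this
      have h2 : u.coeff k ∈ RingHom.ker π := by rw [RingHom.mem_ker]; exact this
      rwa [hπ, Ideal.mk_ker] at h2
    -- the C-embedding as an alg hom
    set g : MvPolynomial (Fin n) R →ₐ[R] MvPolynomial (Fin (n+1)) R :=
      (e.symm.toAlgHom).comp
        ((IsScalarTower.toAlgHom R (MvPolynomial (Fin n) R)
          (Polynomial (MvPolynomial (Fin n) R))).restrictScalars R) with hg
    have hgC : ∀ w, g w = e.symm (Polynomial.C w) := fun w => rfl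
    have hgm : ∀ t : Fin n, g (m'' t) = m t.castSucc := by
      intro t
      have : e (m t.castSucc) = Polynomial.C (m'' t) := by
        have hcr : (e.toAlgHom.comp (rename Fin.castSucc) :
            MvPolynomial (Fin n) R →ₐ[R] Polynomial (MvPolynomial (Fin n) R))
            = (IsScalarTower.toAlgHom R (MvPolynomial (Fin n) R)
                (Polynomial (MvPolynomial (Fin n) R))).restrictScalars R := by
          apply MvPolynomial.algHom_ext
          intro i
          rw [AlgHom.comp_apply, rename_X, AlgEquiv.toAlgHom_eq_coe, AlgEquiv.coe_toAlgHom, heX_cast i]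
          rfl
        rw [← hre t]
        exact AlgHom.congr_fun hcr (m'' t)
      rw [hgC, ← this, AlgEquiv.symm_apply_apply]
    have hgJ : ∀ a ∈ Ideal.span (Set.range m''), g a ∈ Ideal.span (Set.range m) := by
      intro a ha
      have h1 : g a ∈ Ideal.map (g : MvPolynomial (Fin n) R →+* MvPolynomial (Fin (n+1)) R)
          (Ideal.span (Set.range m'')) := Ideal.mem_map_of_mem _ ha
      rw [Ideal.map_span] at h1
      refine Ideal.span_le.2 ?_ h1
      rintro _ ⟨_, ⟨t, rfl⟩, rfl⟩
      exact Ideal.subset_span ⟨t.castSucc, (hgm t).symm⟩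
    -- p = e.symm (M*H) + e.symm u
    have hp_decomp : p = m (Fin.last n) * e.symm H + e.symm u := by
      have : e p = M * H + u := by rw [hu]; ring
      have h2 := congrArg e.symm this
      rw [AlgEquiv.symm_apply_apply] at h2
      rw [h2, map_add, map_mul, hMdef, AlgEquiv.symm_apply_apply]
    rw [hp_decomp]
    refine Ideal.add_mem _ (Ideal.mul_mem_right _ _ (Ideal.subset_span ⟨Fin.last n, rfl⟩)) ?_
    -- e.symm u ∈ span, as u has coefficients in J
    have husum : u = ∑ k ∈ u.support, Polynomial.C (u.coeff k) * Polynomial.X ^ k :=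
      Polynomial.as_sum_support_C_mul_X_pow u
    have hesum : e.symm u
        = ∑ k ∈ u.support, e.symm (Polynomial.C (u.coeff k)) * e.symm Polynomial.X ^ k := by
      conv_lhs => rw [husum]
      rw [map_sum]
      exact Finset.sum_congr rfl fun k _ => by rw [map_mul, map_pow]
    rw [hesum]
    refine Ideal.sum_mem _ fun k _ => Ideal.mul_mem_right _ _ ?_
    have := hgJ (u.coeff k) (hucoeff k)
    rwa [hgC] at this

/-- Let `R` be an integral domain with fraction field `F`, and `α₁, …, αₙ` elements of a
field extension `Ω` of `F`, each `αᵢ` algebraic over `F(α₁, …, α_{i-1})`, such that the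
minimal monic polynomial of `αᵢ` over `F(α₁, …, α_{i-1})` is (the partial evaluation at
`α₁, …, α_{i-1}` of) a polynomial `mᵢ ∈ R[X₁, …, Xᵢ]`.  Then
`R[α₁, …, αₙ] ≅ R[X₁, …, Xₙ]/(m₁, …, mₙ)`, i.e. the kernel of the evaluation map at
`(α₁, …, αₙ)` is the ideal generated by the `mᵢ`; in particular `(m₁, …, mₙ)` is
prime. -/
theorem stmt14 {R : Type*} [CommRing R] [IsDomain R]
    {Ω : Type*} [Field Ω] [Algebra R Ω] [Algebra (FractionRing R) Ω]
    [IsScalarTower R (FractionRing R) Ω]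
    (n : ℕ) (α : Fin n → Ω)
    (halg : ∀ i : Fin n,
      IsIntegral (IntermediateField.adjoin (FractionRing R) (α '' {j | j < i})) (α i))
    (m : Fin n → MvPolynomial (Fin n) R)
    (hvars : ∀ i : Fin n, ∀ j ∈ (m i).vars, j ≤ i)
    (hmin : ∀ i : Fin n,
      MvPolynomial.aeval (fun j => if j < i then Polynomial.C (α j) else Polynomial.X)
          (m i) =
        (minpoly (IntermediateField.adjoin (FractionRing R) (α '' {j | j < i})) (α i)).map
          (algebraMap _ Ω)) :
    RingHom.ker (MvPolynomial.aeval α : MvPolynomial (Fin n) R →ₐ[R] Ω)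
        = Ideal.span (Set.range m) ∧
      (Ideal.span (Set.range m)).IsPrime := by
  have h := ker_eq n α halg m hvars hmin
  refine ⟨h, ?_⟩
  rw [← h]
  exact RingHom.ker_isPrime _
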